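/- Let β ∈ (0,1), q ∈ (0,1], δ := β·q, Q_b > 0, μ_s > 0, S := 1 + 1/δ + δ·Q_b/μ_s and λ* := (S − √(S² − 4/δ))/2. Then P_b := Q_b/(1 − λ*) is well defined and strictly positive, and it satisfies the scalar discrete algebraic Riccati equation P_b = Q_b + P_b/δ − P_b²/(μ_s + δ·P_b). -/

import Mathlib

/-- P_b := Q_b/(1 − λ*) is well defined (1 − λ* ≠ 0) and strictly
positive, and solves the scalar discrete algebraic Riccati equation
P_b = Q_b + P_b/δ − P_b²/(μ_s + δ·P_b). -/
theorem riccati_solution_value_function_coefficient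
    (β q Qb μs δ S lamStar Pb : ℝ)
    (hβ0 : 0 < β) (hβ1 : β < 1) (hq0 : 0 < q) (hq1 : q ≤ 1)
    (hδ : δ = β * q) (hQb : 0 < Qb) (hμs : 0 < μs)
    (hS : S = 1 + 1/δ + δ * Qb / μs)
    (hlamStar : lamStar = (S - Real.sqrt (S ^ 2 - 4 / δ)) / 2)
    (hPb : Pb = Qb / (1 - lamStar)) :
    1 - lamStar ≠ 0 ∧ 0 < Pb ∧
      Pb = Qb + Pb / δ - Pb ^ 2 / (μs + δ * Pb) := by
  have hδ0 : 0 < δ := by rw [hδ]; positivity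
  have hδne : δ ≠ 0 := ne_of_gt hδ0
  have hμne : μs ≠ 0 := ne_of_gt hμs
  have hc : 0 < δ * Qb / μs := by positivity
  have hx : 0 < 1/δ := by positivity
  have hDrw : S ^ 2 - 4 / δ
      = (1/δ - 1)^2 + 2*(δ*Qb/μs)*(1 + 1/δ) + (δ*Qb/μs)^2 := by
    rw [hS]; field_simp; ring
  have hDpos : 0 < S ^ 2 - 4 / δ := by
    rw [hDrw]
    have h1 : 0 < 2*(δ*Qb/μs)*(1 + 1/δ) := by positivity
    nlinarith [sq_nonneg (1/δ - 1), sq_nonneg (δ*Qb/μs)]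
  have hsq : Real.sqrt (S ^ 2 - 4 / δ) ^ 2 = S ^ 2 - 4 / δ :=
    Real.sq_sqrt hDpos.le
  have hroot : lamStar ^ 2 - S * lamStar + 1/δ = 0 := by
    rw [hlamStar]; linear_combination hsq / 4
  have h4 : S - 1 - 1/δ = δ*Qb/μs := by rw [hS]; ring
  have hgap : (S - 2) ^ 2 < S ^ 2 - 4 / δ := by nlinarith [hc, h4]
  have habs : |S - 2| < Real.sqrt (S ^ 2 - 4 / δ) := by
    rw [← Real.sqrt_sq_eq_abs]
    exact Real.sqrt_lt_sqrt (sq_nonneg _) hgap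
  have hlam1 : lamStar < 1 := by
    have h1 : S - 2 < Real.sqrt (S ^ 2 - 4 / δ) :=
      lt_of_le_of_lt (le_abs_self _) habs
    rw [hlamStar]; linarith
  have ht : 0 < 1 - lamStar := by linarith
  have htne : (1 : ℝ) - lamStar ≠ 0 := ne_of_gt ht
  have hPb0 : 0 < Pb := by rw [hPb]; positivity
  refine ⟨htne, hPb0, ?_⟩
  -- cleared versions of the root equation and of S
  have hroot2 : δ * lamStar ^ 2 - δ * S * lamStar + 1 = 0 := by
    have h := hroot
    field_simp at h
    linarith
  have hS2 : μs * δ * S = μs * δ + μs + δ^2 * Qb := by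
    rw [hS]; field_simp
  have hMδ : (μs * (1 - lamStar) + δ * Qb) * (δ * lamStar - 1) = -(δ * Qb) := by
    linear_combination (-μs) * hroot2 - lamStar * hS2
  rw [hPb]
  have hdenne : μs + δ * (Qb / (1 - lamStar)) ≠ 0 := by
    have : 0 < μs + δ * (Qb / (1 - lamStar)) := by positivity
    exact ne_of_gt this
  field_simp
  linear_combination hMδ
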